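/- Opial inequality for initial value problems: Let L = D^n + Σ_{j=0}^{n-1} a_j(t) D^j with a_j ∈ C(I), let G(x,t) be the Green's function of L, and y(x) = ∫ₐˣ G(x,t)h(t) dt the unique solution of Ly = h, y^{(j)}(a) = 0 for j = 0,…,n-1. Then for α, β > 0, r > max(1,α), u ≥ 0, v > 0 continuous on I: ∫ₐˣ u(s)|y(s)|^β |h(s)|^α ds ≤ C(x)(∫ₐˣ v(s)|h(s)|^r ds)^{(α+β)/r}, where C(x) is the weighted Opial constant built from Φ(s,t) = |G(s,t)|. -/

import Mathlib

open intervalIntegral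

open MeasureTheory Set


lemma cont_rpow_of_pos {X : Type*} [TopologicalSpace X] {f : X → ℝ} (hf : Continuous f) {c : ℝ} (hc : 0 < c) :
    Continuous fun s => f s ^ c := by
  apply continuous_iff_continuousAt.2 (fun s => ?_)
  exact (Real.continuousAt_rpow_const _ _ (Or.inr hc.le)).comp hf.continuousAt

lemma cont_rpow_of_ne {X : Type*} [TopologicalSpace X] {f : X → ℝ} (hf : Continuous f) (hf0 : ∀ s, f s ≠ 0) (c : ℝ) :
    Continuous fun s => f s ^ c := by
  apply continuous_iff_continuousAt.2 (fun s => ?_)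
  exact (Real.continuousAt_rpow_const _ _ (Or.inl (hf0 s))).comp hf.continuousAt

lemma holder_interval (a c : ℝ) (hac : a ≤ c) (f g : ℝ → ℝ)
    (hf : Continuous f) (hg : Continuous g)
    (hf0 : ∀ s ∈ Icc a c, 0 ≤ f s) (hg0 : ∀ s ∈ Icc a c, 0 ≤ g s)
    {p q : ℝ} (hpq : Real.HolderConjugate p q) :
    ∫ s in a..c, f s * g s ≤
      (∫ s in a..c, f s ^ p) ^ (1 / p) * (∫ s in a..c, g s ^ q) ^ (1 / q) := by
  have hfin : IsFiniteMeasure (volume.restrict (Ioc a c)) :=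
    ⟨by rw [Measure.restrict_apply_univ, Real.volume_Ioc]; exact ENNReal.ofReal_lt_top⟩
  rw [intervalIntegral.integral_of_le hac, intervalIntegral.integral_of_le hac,
    intervalIntegral.integral_of_le hac]
  have memf : MemLp f (ENNReal.ofReal p) (volume.restrict (Ioc a c)) := by
    obtain ⟨C, hC⟩ := (isCompact_Icc (a := a) (b := c)).exists_bound_of_continuousOn
      hf.continuousOn
    exact MemLp.of_bound hf.aestronglyMeasurable.restrict C
      ((ae_restrict_iff' measurableSet_Ioc).2 (Filter.Eventually.of_forall
        fun s hs => hC s (Ioc_subset_Icc_self hs)))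
  have memg : MemLp g (ENNReal.ofReal q) (volume.restrict (Ioc a c)) := by
    obtain ⟨C, hC⟩ := (isCompact_Icc (a := a) (b := c)).exists_bound_of_continuousOn
      hg.continuousOn
    exact MemLp.of_bound hg.aestronglyMeasurable.restrict C
      ((ae_restrict_iff' measurableSet_Ioc).2 (Filter.Eventually.of_forall
        fun s hs => hC s (Ioc_subset_Icc_self hs)))
  refine MeasureTheory.integral_mul_le_Lp_mul_Lq_of_nonneg hpq ?_ ?_ memf memg
  · exact (ae_restrict_iff' measurableSet_Ioc).2 (Filter.Eventually.of_forall
      fun s hs => hf0 s (Ioc_subset_Icc_self hs))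
  · exact (ae_restrict_iff' measurableSet_Ioc).2 (Filter.Eventually.of_forall
      fun s hs => hg0 s (Ioc_subset_Icc_self hs))

lemma opial_core (a x : ℝ) (hax : a ≤ x)
    (G : ℝ → ℝ → ℝ) (hG : Continuous fun p : ℝ × ℝ => G p.1 p.2)
    (h u v : ℝ → ℝ) (hh : Continuous h) (hu : Continuous u) (hv : Continuous v)
    (hu0 : ∀ s, 0 ≤ u s) (hv0 : ∀ s, 0 < v s)
    (α β r : ℝ) (hα : 0 < α) (hβ : 0 < β) (hr1 : 1 < r) (hrα : α < r) :
    ∫ s in a..x, u s * |∫ t in a..s, G s t * h t| ^ β * |h s| ^ α ≤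
      ((α / (α + β)) ^ (α / r) *
        (∫ s in a..x, (u s ^ r * v s ^ (-α)) ^ (1 / (r - α)) *
            (∫ t in a..s, v t ^ (-(1 / (r - 1))) * |G s t| ^ (r / (r - 1)))
              ^ (β * (r - 1) / (r - α))) ^ ((r - α) / r)) *
      (∫ s in a..x, v s * |h s| ^ r) ^ ((α + β) / r) := by
  have hr0 : (0:ℝ) < r := lt_trans one_pos hr1
  have hrm1 : (0:ℝ) < r - 1 := by linarith
  have hrmα : (0:ℝ) < r - α := by linarith
  have hαβ : (0:ℝ) < α + β := by linarith
  set H : ℝ → ℝ := fun s => ∫ t in a..s, v t * |h t| ^ r with hH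
  set P : ℝ → ℝ := fun s => ∫ t in a..s, v t ^ (-(1 / (r - 1))) * |G s t| ^ (r / (r - 1))
    with hP
  -- continuity facts
  have chabs : Continuous fun t => |h t| := hh.abs
  have chr : Continuous fun t => v t * |h t| ^ r := hv.mul (cont_rpow_of_pos chabs hr0)
  have cH : Continuous H := by
    have := intervalIntegral.continuous_primitive (μ := volume)
      (fun c d => chr.intervalIntegrable c d) a
    exact this
  have cGi : Continuous fun p : ℝ × ℝ =>
      v p.2 ^ (-(1 / (r - 1))) * |G p.1 p.2| ^ (r / (r - 1)) := by
    have c1 : Continuous fun p : ℝ × ℝ => v p.2 ^ (-(1 / (r - 1))) :=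
      cont_rpow_of_ne (hv.comp continuous_snd) (fun p => (hv0 p.2).ne') _
    have c2 : Continuous fun p : ℝ × ℝ => |G p.1 p.2| ^ (r / (r - 1)) :=
      cont_rpow_of_pos hG.abs (by positivity)
    exact c1.mul c2
  have cP : Continuous P := by
    have := intervalIntegral.continuous_parametric_intervalIntegral_of_continuous
      (μ := volume) (a₀ := a)
      (f := fun s t => v t ^ (-(1 / (r - 1))) * |G s t| ^ (r / (r - 1)))
      (by exact cGi) continuous_id
    exact this
  have cy : Continuous fun s => ∫ t in a..s, G s t * h t := by
    have := intervalIntegral.continuous_parametric_intervalIntegral_of_continuous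
      (μ := volume) (a₀ := a) (f := fun s t => G s t * h t)
      (by exact hG.mul (hh.comp continuous_snd)) continuous_id
    exact this
  have hH0 : ∀ s, a ≤ s → 0 ≤ H s := fun s hs =>
    intervalIntegral.integral_nonneg hs (fun t _ => mul_nonneg (hv0 t).le (Real.rpow_nonneg (abs_nonneg _) _))
  have hP0 : ∀ s, a ≤ s → 0 ≤ P s := fun s hs =>
    intervalIntegral.integral_nonneg hs (fun t _ => mul_nonneg (Real.rpow_nonneg (hv0 t).le _) (Real.rpow_nonneg (abs_nonneg _) _))
  -- Step A: pointwise bound on |y s|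
  have key1 : ∀ s, a ≤ s → |∫ t in a..s, G s t * h t| ≤
      P s ^ ((r - 1) / r) * H s ^ (1 / r) := by
    intro s hs
    have cGs : Continuous fun t => G s t := hG.comp (Continuous.prodMk_right s)
    calc |∫ t in a..s, G s t * h t| ≤ ∫ t in a..s, |G s t * h t| :=
          intervalIntegral.abs_integral_le_integral_abs hs
      _ = ∫ t in a..s, (v t ^ (-(1/r)) * |G s t|) * (v t ^ (1/r) * |h t|) := by
          refine intervalIntegral.integral_congr (fun t _ => ?_)
          have e1 : v t ^ (-(1/r)) * v t ^ (1/r) = 1 := by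
            rw [← Real.rpow_add (hv0 t)]; norm_num
          calc |G s t * h t| = (v t ^ (-(1/r)) * v t ^ (1/r)) * (|G s t| * |h t|) := by
                rw [e1, one_mul, abs_mul]
            _ = (v t ^ (-(1/r)) * |G s t|) * (v t ^ (1/r) * |h t|) := by ring
      _ ≤ (∫ t in a..s, (v t ^ (-(1/r)) * |G s t|) ^ (r/(r-1))) ^ (1/(r/(r-1))) *
          (∫ t in a..s, (v t ^ (1/r) * |h t|) ^ r) ^ (1/r) := by
          refine holder_interval a s hs _ _
            ((cont_rpow_of_ne hv (fun t => (hv0 t).ne') _).mul cGs.abs)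
            ((cont_rpow_of_ne hv (fun t => (hv0 t).ne') _).mul chabs)
            (fun t _ => mul_nonneg (Real.rpow_nonneg (hv0 t).le _) (abs_nonneg _))
            (fun t _ => mul_nonneg (Real.rpow_nonneg (hv0 t).le _) (abs_nonneg _))
            (Real.holderConjugate_iff.2 ⟨(one_lt_div hrm1).2 (by linarith), by field_simp; ring⟩)
      _ = P s ^ ((r - 1) / r) * H s ^ (1 / r) := by
          have e2 : (1:ℝ)/(r/(r-1)) = (r-1)/r := one_div_div _ _
          rw [e2]
          congr 1
          · congr 1
            refine intervalIntegral.integral_congr (fun t _ => ?_)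
            rw [Real.mul_rpow (Real.rpow_nonneg (hv0 t).le _) (abs_nonneg _),
              ← Real.rpow_mul (hv0 t).le]
            congr 2
            field_simp
          · congr 1
            refine intervalIntegral.integral_congr (fun t _ => ?_)
            rw [Real.mul_rpow (Real.rpow_nonneg (hv0 t).le _) (abs_nonneg _),
              ← Real.rpow_mul (hv0 t).le]
            rw [one_div_mul_cancel hr0.ne', Real.rpow_one]
  -- Step D: FTC computation
  have cHp : Continuous fun s => H s ^ (β / α) :=
    cont_rpow_of_pos cH (by positivity)
  have keyD : ∫ s in a..x, (v s * |h s| ^ r) * H s ^ (β / α) =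
      (α / (α + β)) * H x ^ ((α + β) / α) := by
    have hp1 : (1:ℝ) ≤ (α + β) / α := by
      rw [le_div_iff₀ hα]; linarith
    have hderH : ∀ s, HasDerivAt H (v s * |h s| ^ r) s := by
      intro s
      exact intervalIntegral.integral_hasDerivAt_right (chr.intervalIntegrable _ _)
        chr.stronglyMeasurable.stronglyMeasurableAtFilter chr.continuousAt
    have hder : ∀ s ∈ uIcc a x,
        HasDerivAt (fun s => (α / (α + β)) * H s ^ ((α + β) / α))
          ((v s * |h s| ^ r) * H s ^ (β / α)) s := by
      intro s _
      have h1 : HasDerivAt (fun s => H s ^ ((α + β) / α))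
          (((α + β) / α) * H s ^ ((α + β) / α - 1) * (v s * |h s| ^ r)) s :=
        HasDerivAt.comp s (Real.hasDerivAt_rpow_const (Or.inr hp1)) (hderH s)
      have h2 := h1.const_mul (α / (α + β))
      refine h2.congr_deriv ?_
      have e3 : (α + β) / α - 1 = β / α := by field_simp; ring
      rw [e3]
      field_simp
    rw [intervalIntegral.integral_eq_sub_of_hasDerivAt hder
      ((chr.mul cHp).intervalIntegrable _ _)]
    have hHa : H a = 0 := intervalIntegral.integral_same
    rw [hHa, Real.zero_rpow (by positivity), mul_zero, sub_zero]
  -- Step B + C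
  set f : ℝ → ℝ := fun s => u s * P s ^ ((r-1)/r*β) * v s ^ (-(α/r)) with hf
  set g : ℝ → ℝ := fun s => v s ^ (α/r) * |h s| ^ α * H s ^ (1/r*β) with hg
  have cf : Continuous f :=
    (hu.mul (cont_rpow_of_pos cP (by positivity))).mul
      (cont_rpow_of_ne hv (fun t => (hv0 t).ne') _)
  have cg : Continuous g :=
    ((cont_rpow_of_ne hv (fun t => (hv0 t).ne') _).mul
      (cont_rpow_of_pos chabs hα)).mul (cont_rpow_of_pos cH (by positivity))
  have f0 : ∀ s ∈ Icc a x, 0 ≤ f s := fun s hs =>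
    mul_nonneg (mul_nonneg (hu0 s) (Real.rpow_nonneg (hP0 s hs.1) _))
      (Real.rpow_nonneg (hv0 s).le _)
  have g0 : ∀ s ∈ Icc a x, 0 ≤ g s := fun s hs =>
    mul_nonneg (mul_nonneg (Real.rpow_nonneg (hv0 s).le _)
      (Real.rpow_nonneg (abs_nonneg _) _)) (Real.rpow_nonneg (hH0 s hs.1) _)
  have hconj : Real.HolderConjugate (r/(r-α)) (r/α) := by
    refine Real.holderConjugate_iff.2 ⟨?_, ?_⟩
    · exact (one_lt_div hrmα).2 (by linarith)
    · rw [← one_div, ← one_div, one_div_div, one_div_div]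
      field_simp; ring
  have stepB : ∫ s in a..x, u s * |∫ t in a..s, G s t * h t| ^ β * |h s| ^ α ≤
      ∫ s in a..x, f s * g s := by
    refine intervalIntegral.integral_mono_on hax
      (((hu.mul (cont_rpow_of_pos cy.abs hβ)).mul
        (cont_rpow_of_pos chabs hα)).intervalIntegrable _ _)
      ((cf.mul cg).intervalIntegrable _ _) (fun s hs => ?_)
    have h1 : |∫ t in a..s, G s t * h t| ^ β ≤
        P s ^ ((r-1)/r*β) * H s ^ (1/r*β) := by
      have h2 := Real.rpow_le_rpow (abs_nonneg _) (key1 s hs.1) hβ.le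
      rwa [Real.mul_rpow (Real.rpow_nonneg (hP0 s hs.1) _)
        (Real.rpow_nonneg (hH0 s hs.1) _), ← Real.rpow_mul (hP0 s hs.1),
        ← Real.rpow_mul (hH0 s hs.1)] at h2
    have hv1 : v s ^ (-(α/r)) * v s ^ (α/r) = 1 := by
      rw [← Real.rpow_add (hv0 s)]; norm_num
    calc u s * |∫ t in a..s, G s t * h t| ^ β * |h s| ^ α
        ≤ u s * (P s ^ ((r-1)/r*β) * H s ^ (1/r*β)) * |h s| ^ α := by
          refine mul_le_mul_of_nonneg_right (mul_le_mul_of_nonneg_left h1 (hu0 s))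
            (Real.rpow_nonneg (abs_nonneg _) _)
      _ = f s * g s := by
          rw [show f s * g s = (v s ^ (-(α/r)) * v s ^ (α/r)) *
            (u s * (P s ^ ((r-1)/r*β) * H s ^ (1/r*β)) * |h s| ^ α) from by
              simp only [hf, hg]; ring, hv1, one_mul]
  have stepC : ∫ s in a..x, f s * g s ≤
      (∫ s in a..x, f s ^ (r/(r-α))) ^ (1/(r/(r-α))) *
      (∫ s in a..x, g s ^ (r/α)) ^ (1/(r/α)) :=
    holder_interval a x hax f g cf cg f0 g0 hconj
  -- identify the two Hölder factors
  have eqF : ∫ s in a..x, f s ^ (r/(r-α)) =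
      ∫ s in a..x, (u s ^ r * v s ^ (-α)) ^ (1 / (r - α)) *
        P s ^ (β * (r - 1) / (r - α)) := by
    refine intervalIntegral.integral_congr (fun s hs => ?_)
    rw [uIcc_of_le hax] at hs
    simp only [hf]
    rw [Real.mul_rpow (mul_nonneg (hu0 s) (Real.rpow_nonneg (hP0 s hs.1) _))
        (Real.rpow_nonneg (hv0 s).le _),
      Real.mul_rpow (hu0 s) (Real.rpow_nonneg (hP0 s hs.1) _),
      ← Real.rpow_mul (hP0 s hs.1), ← Real.rpow_mul (hv0 s).le,
      Real.mul_rpow (Real.rpow_nonneg (hu0 s) _) (Real.rpow_nonneg (hv0 s).le _),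
      ← Real.rpow_mul (hu0 s), ← Real.rpow_mul (hv0 s).le]
    rw [show (r-1)/r*β * (r/(r-α)) = β * (r - 1) / (r - α) from by
        field_simp,
      show -(α/r) * (r/(r-α)) = -α * (1 / (r - α)) from by field_simp,
      show r * (1 / (r - α)) = r/(r-α) from by field_simp]
    ring
  have eqG : ∫ s in a..x, g s ^ (r/α) =
      (α / (α + β)) * H x ^ ((α + β) / α) := by
    rw [← keyD]
    refine intervalIntegral.integral_congr (fun s hs => ?_)
    rw [uIcc_of_le hax] at hs
    simp only [hg]
    rw [Real.mul_rpow (mul_nonneg (Real.rpow_nonneg (hv0 s).le _)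
        (Real.rpow_nonneg (abs_nonneg _) _)) (Real.rpow_nonneg (hH0 s hs.1) _),
      Real.mul_rpow (Real.rpow_nonneg (hv0 s).le _) (Real.rpow_nonneg (abs_nonneg _) _),
      ← Real.rpow_mul (hv0 s).le, ← Real.rpow_mul (abs_nonneg _),
      ← Real.rpow_mul (hH0 s hs.1)]
    rw [show α/r * (r/α) = 1 from by field_simp,
      show α * (r/α) = r from by field_simp,
      show 1/r*β * (r/α) = β / α from by field_simp]
    rw [Real.rpow_one]
  -- combine
  have hHx0 : 0 ≤ H x := hH0 x hax
  calc ∫ s in a..x, u s * |∫ t in a..s, G s t * h t| ^ β * |h s| ^ α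
      ≤ (∫ s in a..x, f s ^ (r/(r-α))) ^ (1/(r/(r-α))) *
        (∫ s in a..x, g s ^ (r/α)) ^ (1/(r/α)) := le_trans stepB stepC
    _ = (∫ s in a..x, (u s ^ r * v s ^ (-α)) ^ (1 / (r - α)) *
          P s ^ (β * (r - 1) / (r - α))) ^ ((r-α)/r) *
        ((α / (α + β)) * H x ^ ((α + β) / α)) ^ (α/r) := by
        rw [eqF, eqG, one_div_div, one_div_div]
    _ = ((α / (α + β)) ^ (α / r) *
          (∫ s in a..x, (u s ^ r * v s ^ (-α)) ^ (1 / (r - α)) *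
            P s ^ (β * (r - 1) / (r - α))) ^ ((r - α) / r)) *
        H x ^ ((α + β) / r) := by
        rw [Real.mul_rpow (by positivity) (Real.rpow_nonneg hHx0 _),
          ← Real.rpow_mul hHx0,
          show (α + β) / α * (α/r) = (α + β) / r from by field_simp]
        ring


/-- Opial inequality for initial value problems: if `y(x) = ∫ₐˣ G(x,t) h(t) dt` is the
solution of `Ly = h`, `y⁽ʲ⁾(a) = 0`, given by the Green's function `G` of the linear
differential operator `L`, then the weighted Opial inequality holds with `Φ = |G|`. -/
theorem opial_green_function (a b : ℝ) (hab : a ≤ b)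
    (G : ℝ → ℝ → ℝ)
    (hGc : ContinuousOn (fun p : ℝ × ℝ => G p.1 p.2) (Set.Icc a b ×ˢ Set.Icc a b))
    (h y u v : ℝ → ℝ)
    (hh : ContinuousOn h (Set.Icc a b))
    (hrep : ∀ x ∈ Set.Icc a b, y x = ∫ t in a..x, G x t * h t)
    (hu : ContinuousOn u (Set.Icc a b)) (hv : ContinuousOn v (Set.Icc a b))
    (hu0 : ∀ s ∈ Set.Icc a b, 0 ≤ u s) (hv0 : ∀ s ∈ Set.Icc a b, 0 < v s)
    (α β r : ℝ) (hα : 0 < α) (hβ : 0 < β) (hr : max 1 α < r)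
    (x : ℝ) (hx : x ∈ Set.Icc a b) :
    ∫ s in a..x, u s * |y s| ^ β * |h s| ^ α ≤
      ((α / (α + β)) ^ (α / r) *
        (∫ s in a..x, (u s ^ r * v s ^ (-α)) ^ (1 / (r - α)) *
            (∫ t in a..s, v t ^ (-(1 / (r - 1))) * |G s t| ^ (r / (r - 1)))
              ^ (β * (r - 1) / (r - α))) ^ ((r - α) / r)) *
      (∫ s in a..x, v s * |h s| ^ r) ^ ((α + β) / r) := by
  have hax : a ≤ x := hx.1
  have hxb : x ≤ b := hx.2
  have hr1 : 1 < r := lt_of_le_of_lt (le_max_left _ _) hr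
  have hrα : α < r := lt_of_le_of_lt (le_max_right _ _) hr
  set π : ℝ → ℝ := fun t => max a (min t b) with hπ
  have hπc : Continuous π := continuous_const.max (continuous_id.min continuous_const)
  have hπmem : ∀ t, π t ∈ Icc a b := fun t =>
    ⟨le_max_left _ _, max_le hab (min_le_right _ _)⟩
  have hπid : ∀ t ∈ Icc a b, π t = t := fun t ht => by
    simp only [hπ]; rw [min_eq_left ht.2, max_eq_right ht.1]
  set G' : ℝ → ℝ → ℝ := fun s t => G (π s) (π t) with hG'def
  have hG' : Continuous fun p : ℝ × ℝ => G' p.1 p.2 := by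
    have : Continuous fun p : ℝ × ℝ => ((π p.1, π p.2) : ℝ × ℝ) :=
      (hπc.comp continuous_fst).prodMk (hπc.comp continuous_snd)
    exact hGc.comp_continuous this (fun p => ⟨hπmem _, hπmem _⟩)
  set h' : ℝ → ℝ := fun t => h (π t) with hh'def
  set u' : ℝ → ℝ := fun t => u (π t) with hu'def
  set v' : ℝ → ℝ := fun t => v (π t) with hv'def
  have hh' : Continuous h' := hh.comp_continuous hπc hπmem
  have hu' : Continuous u' := hu.comp_continuous hπc hπmem
  have hv' : Continuous v' := hv.comp_continuous hπc hπmem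
  have hu0' : ∀ s, 0 ≤ u' s := fun s => hu0 _ (hπmem s)
  have hv0' : ∀ s, 0 < v' s := fun s => hv0 _ (hπmem s)
  have key := opial_core a x hax G' hG' h' u' v' hh' hu' hv' hu0' hv0'
    α β r hα hβ hr1 hrα
  have hsub : Icc a x ⊆ Icc a b := Icc_subset_Icc_right hxb
  -- rewrite the three integrals
  have eqL : ∫ s in a..x, u' s * |∫ t in a..s, G' s t * h' t| ^ β * |h' s| ^ α =
      ∫ s in a..x, u s * |y s| ^ β * |h s| ^ α := by
    refine intervalIntegral.integral_congr (fun s hs => ?_)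
    rw [uIcc_of_le hax] at hs
    have hs' : s ∈ Icc a b := hsub hs
    have hy : ∫ t in a..s, G' s t * h' t = y s := by
      rw [hrep s hs']
      refine intervalIntegral.integral_congr (fun t ht => ?_)
      rw [uIcc_of_le hs.1] at ht
      have ht' : t ∈ Icc a b := (Icc_subset_Icc_right hs'.2) ht
      simp only [hG'def, hh'def, hπid s hs', hπid t ht']
    rw [hy]
    simp only [hu'def, hh'def, hπid s hs']
  have eqH : ∫ s in a..x, v' s * |h' s| ^ r = ∫ s in a..x, v s * |h s| ^ r := by
    refine intervalIntegral.integral_congr (fun s hs => ?_)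
    rw [uIcc_of_le hax] at hs
    simp only [hv'def, hh'def, hπid s (hsub hs)]
  have eqF : ∫ s in a..x, (u' s ^ r * v' s ^ (-α)) ^ (1 / (r - α)) *
        (∫ t in a..s, v' t ^ (-(1 / (r - 1))) * |G' s t| ^ (r / (r - 1)))
          ^ (β * (r - 1) / (r - α)) =
      ∫ s in a..x, (u s ^ r * v s ^ (-α)) ^ (1 / (r - α)) *
        (∫ t in a..s, v t ^ (-(1 / (r - 1))) * |G s t| ^ (r / (r - 1)))
          ^ (β * (r - 1) / (r - α)) := by
    refine intervalIntegral.integral_congr (fun s hs => ?_)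
    rw [uIcc_of_le hax] at hs
    have hs' : s ∈ Icc a b := hsub hs
    have hinner : ∫ t in a..s, v' t ^ (-(1 / (r - 1))) * |G' s t| ^ (r / (r - 1)) =
        ∫ t in a..s, v t ^ (-(1 / (r - 1))) * |G s t| ^ (r / (r - 1)) := by
      refine intervalIntegral.integral_congr (fun t ht => ?_)
      rw [uIcc_of_le hs.1] at ht
      have ht' : t ∈ Icc a b := (Icc_subset_Icc_right hs'.2) ht
      simp only [hG'def, hv'def, hπid s hs', hπid t ht']
    rw [hinner]
    simp only [hu'def, hv'def, hπid s hs']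
  rw [eqL, eqH, eqF] at key
  exact key
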